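/- arXiv:2510.24914 — 5 statements merged into one kernel-verified Lean document; each statement's English description precedes it below -/
import Mathlib

section
/- For every d ∈ ℕ and every real x ∈ [0, 1) such that the series Σ_{n≥1} A_{d+1,n} x^{n−1} converges, the following hold: for every integer j ≥ 1 the series Σ_{n≥1} A_{d,n} x^{jn} converges, the series Σ_{j≥1} (1/j) · (Σ_{n≥1} A_{d,n} x^{jn}) converges, and Σ_{n≥1} A_{d+1,n} x^{n−1} = exp( Σ_{j≥1} (1/j) · Σ_{n≥1} A_{d,n} x^{jn} ). Equivalently, writing φ_d(x) := Σ_{n≥1} A_{d,n} x^{n−1}, one has φ_{d+1}(x) = exp( Σ_{j≥1} (x^j / j) · φ_d(x^j) ). -/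
/-- Rooted unlabeled trees of depth at most `d`: `T_0` is the single-vertex tree and
`T_{d+1}` is the type of multisets of trees in `T_d`. -/
def TreeT : ℕ → Type
  | 0 => PUnit
  | d + 1 => Multiset (TreeT d)

/-- Number of vertices of a tree. -/
def treeSize : (d : ℕ) → TreeT d → ℕ
  | 0, _ => 1
  | d + 1, m => 1 + (Multiset.map (treeSize d) (m : Multiset (TreeT d))).sum

/-- `aCount d n` is the number of rooted unlabeled trees of depth at most `d`
with exactly `n` vertices. -/
noncomputable def aCount (d n : ℕ) : ℕ :=
  {t : TreeT d | treeSize d t = n}.ncard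

section PhiAux

open scoped ENNReal
open Filter Topology

instance instDecEqTreeT : ∀ d, DecidableEq (TreeT d)
  | 0 => fun a b => by cases a; cases b; exact isTrue rfl
  | d + 1 => letI := instDecEqTreeT d; inferInstanceAs (DecidableEq (Multiset (TreeT d)))

lemma one_le_treeSize (d : ℕ) (t : TreeT d) : 1 ≤ treeSize d t := by
  cases d with
  | zero => simp [treeSize]
  | succ d => show 1 ≤ 1 + _ ; omega

lemma multiset_finite {β : Type} [DecidableEq β] {S : Set β} (hS : S.Finite) (n : ℕ) :
    {m : Multiset β | (∀ t ∈ m, t ∈ S) ∧ Multiset.card m ≤ n}.Finite := by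
  classical
  apply Set.Finite.of_finite_image (f := fun m (t : ↥hS.toFinset) =>
    (⟨min (Multiset.count ↑t m) n, by omega⟩ : Fin (n + 1)))
  · exact Set.toFinite _
  · intro m₁ h₁ m₂ h₂ hf
    ext b
    by_cases hb : b ∈ S
    · have hb' : b ∈ hS.toFinset := hS.mem_toFinset.2 hb
      have := congrFun hf ⟨b, hb'⟩
      simp only [Fin.mk.injEq] at this
      have c1 : Multiset.count b m₁ ≤ n := (Multiset.count_le_card _ _).trans h₁.2
      have c2 : Multiset.count b m₂ ≤ n := (Multiset.count_le_card _ _).trans h₂.2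
      omega
    · rw [Multiset.count_eq_zero_of_notMem (fun hm => hb (h₁.1 b hm)),
        Multiset.count_eq_zero_of_notMem (fun hm => hb (h₂.1 b hm))]

lemma treeT_finite_le : ∀ d n : ℕ, {t : TreeT d | treeSize d t ≤ n}.Finite
  | 0, n => by
    haveI : Finite (TreeT 0) := inferInstanceAs (Finite PUnit.{1})
    exact Set.toFinite _
  | d + 1, n => by
    apply (multiset_finite (treeT_finite_le d n) n).subset
    intro m hm
    have hm' : 1 + (Multiset.map (treeSize d) (m : Multiset (TreeT d))).sum ≤ n := hm
    constructor
    · intro t ht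
      have : treeSize d t ≤ (Multiset.map (treeSize d) (m : Multiset (TreeT d))).sum :=
        Multiset.single_le_sum (fun x _ => Nat.zero_le x) _ (Multiset.mem_map_of_mem _ ht)
      simp only [Set.mem_setOf_eq]; omega
    · have : Multiset.card (Multiset.map (treeSize d) (m : Multiset (TreeT d))) • 1 ≤
          (Multiset.map (treeSize d) (m : Multiset (TreeT d))).sum :=
        Multiset.card_nsmul_le_sum (fun x hx => by
          obtain ⟨t, _, rfl⟩ := Multiset.mem_map.1 hx
          exact one_le_treeSize d t)
      simp only [Multiset.card_map, smul_eq_mul, mul_one] at this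
      omega

lemma treeT_finite_eq (d n : ℕ) : {t : TreeT d | treeSize d t = n}.Finite :=
  (treeT_finite_le d n).subset fun _ h => le_of_eq h

-- generic ENNReal grouping
lemma tsum_comp_enn {β : Type} (f : β → ℕ) (hfin : ∀ n, {t : β | f t = n}.Finite)
    (c : ℕ → ℝ≥0∞) :
    ∑' t : β, c (f t) = ∑' n : ℕ, ({t : β | f t = n}.ncard : ℝ≥0∞) * c n := by
  rw [← Equiv.tsum_eq (Equiv.sigmaFiberEquiv f) (fun t => c (f t)), ENNReal.tsum_sigma']
  congr 1; funext n
  have h1 : ∀ t : {x // f x = n}, c (f ((Equiv.sigmaFiberEquiv f) ⟨n, t⟩)) = c n := by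
    intro t; simp [Equiv.sigmaFiberEquiv, t.2]
  haveI : Fintype {x : β // f x = n} := (hfin n).fintype
  haveI : Fintype ↥{t : β | f t = n} := (hfin n).fintype
  have hn : {t : β | f t = n}.ncard = Fintype.card {x : β // f x = n} := by
    rw [← Nat.card_coe_set_eq, Nat.card_eq_fintype_card]
    exact Fintype.card_congr (Equiv.subtypeEquivRight fun x => Iff.rfl)
  rw [tsum_congr h1, tsum_fintype, Finset.sum_const, Finset.card_univ, nsmul_eq_mul, hn]

-- generic real grouping
lemma tsum_comp_real {β : Type} (f : β → ℕ) (hfin : ∀ n, {t : β | f t = n}.Finite)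
    (c : ℕ → ℝ) (hc : ∀ n, 0 ≤ c n)
    (hs : Summable fun n : ℕ => ({t : β | f t = n}.ncard : ℝ) * c n) :
    Summable (fun t : β => c (f t)) ∧
      ∑' t : β, c (f t) = ∑' n : ℕ, ({t : β | f t = n}.ncard : ℝ) * c n := by
  have key : ∀ n, ∑' t : {x : β // f x = n}, c (f ↑t) = ({t : β | f t = n}.ncard : ℝ) * c n := by
    intro n
    have h1 : ∀ t : {x : β // f x = n}, c (f ↑t) = c n := fun t => by rw [t.2]
    haveI : Fintype {x : β // f x = n} := (hfin n).fintype
    haveI : Fintype ↥{t : β | f t = n} := (hfin n).fintype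
    have hn : {t : β | f t = n}.ncard = Fintype.card {x : β // f x = n} := by
      rw [← Nat.card_coe_set_eq, Nat.card_eq_fintype_card]
      exact Fintype.card_congr (Equiv.subtypeEquivRight fun x => Iff.rfl)
    rw [tsum_congr h1, tsum_fintype, Finset.sum_const, Finset.card_univ, nsmul_eq_mul, hn]
  have hsig : Summable fun p : Σ n : ℕ, {x : β // f x = n} => c (f p.2) := by
    apply (summable_sigma_of_nonneg (fun p => hc _)).2
    refine ⟨fun n => ?_, ?_⟩
    · haveI : Fintype {x : β // f x = n} := (hfin n).fintype
      exact Summable.of_finite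
    · simp only [key]; exact hs
  have hsum : Summable (fun t : β => c (f t)) :=
    (Equiv.sigmaFiberEquiv f).summable_iff.1 (by exact hsig)
  refine ⟨hsum, ?_⟩
  rw [← Equiv.tsum_eq (Equiv.sigmaFiberEquiv f) (fun t => c (f t))]
  rw [Summable.tsum_sigma (by exact hsig)]
  exact tsum_congr key

variable {α : Type} [DecidableEq α]

lemma tsum_multiset_eq_iSup (f : Multiset α → ℝ≥0∞) :
    ∑' m : Multiset α, f m
      = ⨆ s : Finset α, ∑' m : ↥{m : Multiset α | ∀ t ∈ m, t ∈ s}, f ↑m := by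
  apply le_antisymm
  · rw [ENNReal.tsum_eq_iSup_sum]
    apply iSup_le; intro S
    refine le_trans ?_ (le_iSup _ (S.biUnion Multiset.toFinset))
    rw [tsum_subtype]
    calc ∑ m ∈ S, f m
        = ∑ m ∈ S, Set.indicator {m : Multiset α | ∀ t ∈ m, t ∈ S.biUnion Multiset.toFinset} f m := by
          refine Finset.sum_congr rfl (fun m hm => ?_)
          rw [Set.indicator_of_mem]
          exact fun t ht => Finset.mem_biUnion.2 ⟨m, hm, Multiset.mem_toFinset.2 ht⟩
      _ ≤ _ := ENNReal.sum_le_tsum S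
  · apply iSup_le; intro s
    rw [tsum_subtype]
    exact ENNReal.tsum_le_tsum (fun m => Set.indicator_le_self' (fun _ _ => zero_le) m)

lemma tsum_subms (sz : α → ℕ) (X : ℝ≥0∞) (s : Finset α) :
    ∑' m : ↥{m : Multiset α | ∀ t ∈ m, t ∈ s}, X ^ ((Multiset.map sz (↑m : Multiset α)).sum)
      = ∏ t ∈ s, (1 - X ^ sz t)⁻¹ := by
  induction s using Finset.induction_on with
  | empty =>
    rw [Finset.prod_empty]
    have hu : ∀ b : ↥{m : Multiset α | ∀ t ∈ m, t ∈ (∅ : Finset α)},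
        b = (⟨0, by simp⟩ : ↥{m : Multiset α | ∀ t ∈ m, t ∈ (∅ : Finset α)}) := by
      intro b
      refine Subtype.ext (Multiset.eq_zero_of_forall_notMem (fun t ht => ?_))
      exact absurd (b.2 t ht) (Finset.notMem_empty t)
    rw [tsum_eq_single (⟨0, by simp⟩ : ↥{m : Multiset α | ∀ t ∈ m, t ∈ (∅ : Finset α)})
      (fun b hb => absurd (hu b) hb)]
    simp
  | @insert a s ha ih =>
    let e : ℕ × ↥{m : Multiset α | ∀ t ∈ m, t ∈ s}
        ≃ ↥{m : Multiset α | ∀ t ∈ m, t ∈ insert a s} :=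
      { toFun := fun p => ⟨(p.2 : Multiset α) + Multiset.replicate p.1 a, by
          intro t ht
          rcases Multiset.mem_add.1 ht with h | h
          · exact Finset.mem_insert_of_mem (p.2.2 t h)
          · rw [Multiset.eq_of_mem_replicate h]; exact Finset.mem_insert_self a s⟩
        invFun := fun m => ((m : Multiset α).count a,
          ⟨(m : Multiset α).filter (· ≠ a), by
            intro t ht
            rw [Multiset.mem_filter] at ht
            rcases Finset.mem_insert.1 (m.2 t ht.1) with h | h
            · exact absurd h ht.2
            · exact h⟩)
        left_inv := fun p => by
          obtain ⟨k, m⟩ := p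
          have ham : a ∉ (m : Multiset α) := fun h => ha (m.2 a h)
          have h1 : ((m : Multiset α) + Multiset.replicate k a).count a = k := by
            rw [Multiset.count_add, Multiset.count_replicate_self,
              Multiset.count_eq_zero_of_notMem ham, zero_add]
          have h2 : ((m : Multiset α) + Multiset.replicate k a).filter (· ≠ a)
              = (m : Multiset α) := by
            rw [Multiset.filter_add]
            have hm1 : Multiset.filter (fun x => x ≠ a) ((m : Multiset α)) = (m : Multiset α) :=
              Multiset.filter_eq_self.2 (fun t ht (h : t = a) => ham (h ▸ ht))
            rw [hm1]
            have : (Multiset.replicate k a).filter (· ≠ a) = 0 := by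
              apply Multiset.filter_eq_nil.2
              intro t ht h
              exact h (Multiset.eq_of_mem_replicate ht)
            rw [this, add_zero]
          exact Prod.ext (by simp [h1]) (Subtype.ext (by simp [h2]))
        right_inv := fun m => by
          apply Subtype.ext
          show (m : Multiset α).filter (· ≠ a)
              + Multiset.replicate ((m : Multiset α).count a) a = (m : Multiset α)
          ext b
          by_cases hb : b = a
          · subst hb
            rw [Multiset.count_add, Multiset.count_filter, Multiset.count_replicate_self]
            simp
          · rw [Multiset.count_add, Multiset.count_filter, Multiset.count_replicate]
            simp [hb, Ne.symm hb] }
    rw [← Equiv.tsum_eq e]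
    have hval : ∀ p : ℕ × ↥{m : Multiset α | ∀ t ∈ m, t ∈ s},
        X ^ ((Multiset.map sz ((e p : Multiset α))).sum)
          = (X ^ sz a) ^ p.1 * X ^ ((Multiset.map sz ((p.2 : Multiset α))).sum) := by
      intro p
      have : ((e p : Multiset α)) = (p.2 : Multiset α) + Multiset.replicate p.1 a := rfl
      rw [this, Multiset.map_add, Multiset.sum_add, Multiset.map_replicate,
        Multiset.sum_replicate, smul_eq_mul, pow_add, pow_mul', mul_comm]
    rw [tsum_congr hval, ENNReal.tsum_prod']
    simp only [ENNReal.tsum_mul_left]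
    rw [ENNReal.tsum_mul_right, ih, ENNReal.tsum_geometric, Finset.prod_insert ha]


variable {γ : Type}

lemma endgame {α : Type} (y : α → ℝ) (hy0 : ∀ t, 0 ≤ y t) (hy1 : ∀ t, y t < 1)
    (hg : Summable fun t => -Real.log (1 - y t)) (B : ℝ≥0∞)
    (hiSup : (⨆ s : Finset α, ∏ t ∈ s, (1 - ENNReal.ofReal (y t))⁻¹) = B) :
    ENNReal.ofReal (Real.exp (∑' t, -Real.log (1 - y t))) = B := by
  have h1y : ∀ t, 0 < 1 - y t := fun t => by linarith [hy1 t]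
  have hprod : HasProd (fun t => (1 - y t)⁻¹)
      (Real.exp (∑' t, -Real.log (1 - y t))) := by
    have h := hg.hasSum.rexp
    have heq : (Real.exp ∘ fun t => -Real.log (1 - y t)) = fun t => (1 - y t)⁻¹ := by
      funext t
      simp only [Function.comp_apply, Real.exp_neg, Real.exp_log (h1y t)]
    rwa [heq] at h
  have htendR : Tendsto (fun s : Finset α => ∏ t ∈ s, (1 - y t)⁻¹) atTop
      (𝓝 (Real.exp (∑' t, -Real.log (1 - y t)))) := hprod
  have htendE : Tendsto (fun s : Finset α => ENNReal.ofReal (∏ t ∈ s, (1 - y t)⁻¹)) atTop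
      (𝓝 (ENNReal.ofReal (Real.exp (∑' t, -Real.log (1 - y t))))) :=
    (ENNReal.continuous_ofReal.tendsto _).comp htendR
  have hterm : ∀ s : Finset α,
      ENNReal.ofReal (∏ t ∈ s, (1 - y t)⁻¹) = ∏ t ∈ s, (1 - ENNReal.ofReal (y t))⁻¹ := by
    intro s
    classical
    induction s using Finset.induction_on with
    | empty => simp
    | @insert a s ha ih =>
      rw [Finset.prod_insert ha, Finset.prod_insert ha,
        ENNReal.ofReal_mul (inv_nonneg.2 (h1y a).le), ih, ENNReal.ofReal_inv_of_pos (h1y a),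
        ENNReal.ofReal_sub 1 (hy0 a), ENNReal.ofReal_one]
  have htendE' : Tendsto (fun s : Finset α => ∏ t ∈ s, (1 - ENNReal.ofReal (y t))⁻¹) atTop
      (𝓝 (ENNReal.ofReal (Real.exp (∑' t, -Real.log (1 - y t))))) := by
    apply htendE.congr
    intro s; exact hterm s
  have hmono : Monotone (fun s : Finset α => ∏ t ∈ s, (1 - ENNReal.ofReal (y t))⁻¹) := by
    intro s u hsu
    exact Finset.prod_le_prod_of_subset_of_one_le' hsu
      (fun t _ _ => ENNReal.one_le_inv.2 tsub_le_self)
  have h2 := tendsto_atTop_iSup hmono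
  rw [hiSup] at h2
  exact tendsto_nhds_unique htendE' h2


end PhiAux

set_option maxHeartbeats 1600000

open scoped ENNReal

/-- The recursion `φ_{d+1}(x) = exp( Σ_{j≥1} (x^j/j) φ_d(x^j) )` for the generating
functions `φ_d(x) = Σ_{n≥1} A_{d,n} x^{n-1}` of the numbers of trees of depth at most `d`.
Here the sum `Σ_{n≥1} A_{d,n} x^{jn}` is written as `Σ_{n : ℕ} A_{d,n+1} x^{j(n+1)}`
and `Σ_{j≥1}` as `Σ_{j : ℕ}` with `j` shifted by one. -/
theorem phi_recursion (d : ℕ) (x : ℝ) (hx0 : 0 ≤ x) (hx1 : x < 1)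
    (hsum : Summable fun n : ℕ => (aCount (d + 1) (n + 1) : ℝ) * x ^ n) :
    (∀ j : ℕ, 1 ≤ j → Summable fun n : ℕ => (aCount d (n + 1) : ℝ) * x ^ (j * (n + 1))) ∧
    (Summable fun j : ℕ =>
      (1 / (j + 1) : ℝ) * ∑' n : ℕ, (aCount d (n + 1) : ℝ) * x ^ ((j + 1) * (n + 1))) ∧
    ∑' n : ℕ, (aCount (d + 1) (n + 1) : ℝ) * x ^ n =
      Real.exp (∑' j : ℕ,
        (1 / (j + 1) : ℝ) * ∑' n : ℕ, (aCount d (n + 1) : ℝ) * x ^ ((j + 1) * (n + 1))) := by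
  classical
  have hfibd : ∀ n, {t : TreeT d | treeSize d t = n}.Finite := treeT_finite_eq d
  -- comparison of coefficients
  have hab : ∀ n : ℕ, (aCount d (n + 1) : ℝ) ≤ (aCount (d + 1) (n + 2) : ℝ) := by
    intro n
    have hn : aCount d (n + 1) ≤ aCount (d + 1) (n + 2) := by
      rw [aCount, aCount]
      apply Set.ncard_le_ncard_of_injOn (fun t => ({t} : Multiset (TreeT d)))
        (ht := treeT_finite_eq (d + 1) (n + 2))
      · intro t ht
        have h1 : treeSize (d + 1) ({t} : Multiset (TreeT d)) = 1 + treeSize d t := by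
          show 1 + (Multiset.map (treeSize d) ({t} : Multiset (TreeT d))).sum = _
          rw [Multiset.map_singleton, Multiset.sum_singleton]
        show treeSize (d + 1) ({t} : Multiset (TreeT d)) = n + 2
        have ht' : treeSize d t = n + 1 := ht
        rw [h1, ht']
        omega
      · intro t _ t' _ h
        simpa using h
    exact_mod_cast hn
  have hbshift : Summable (fun n : ℕ => (aCount (d + 1) (n + 2) : ℝ) * x ^ (n + 1)) :=
    (summable_nat_add_iff 1).2 hsum
  -- Goal 1
  have goal1 : ∀ j : ℕ, 1 ≤ j →
      Summable fun n : ℕ => (aCount d (n + 1) : ℝ) * x ^ (j * (n + 1)) := by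
    intro j hj
    apply Summable.of_nonneg_of_le (fun n => by positivity) _ hbshift
    intro n
    apply mul_le_mul (hab n) ?_ (by positivity) (Nat.cast_nonneg _)
    exact pow_le_pow_of_le_one hx0 hx1.le (Nat.le_mul_of_pos_left _ (by omega))
  -- grouping for trees (real)
  have hA : ∀ j : ℕ, 1 ≤ j → Summable (fun t : TreeT d => x ^ (j * treeSize d t)) ∧
      ∑' t : TreeT d, x ^ (j * treeSize d t)
        = ∑' n : ℕ, (aCount d (n + 1) : ℝ) * x ^ (j * (n + 1)) := by
    intro j hj
    have h0 : ({t : TreeT d | treeSize d t = 0}.ncard : ℝ) * x ^ (j * 0) = 0 := by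
      have he : {t : TreeT d | treeSize d t = 0} = ∅ := by
        ext t
        simp only [Set.mem_setOf_eq, Set.mem_empty_iff_false, iff_false]
        have := one_le_treeSize d t; omega
      rw [he, Set.ncard_empty]; simp
    have hsgrp : Summable
        (fun n : ℕ => ({t : TreeT d | treeSize d t = n}.ncard : ℝ) * x ^ (j * n)) := by
      have hg1 := goal1 j hj
      simp only [aCount] at hg1
      exact (summable_nat_add_iff
        (f := fun n : ℕ => ({t : TreeT d | treeSize d t = n}.ncard : ℝ) * x ^ (j * n)) 1).1 hg1
    obtain ⟨hsum', heq⟩ := tsum_comp_real (fun t => treeSize d t) hfibd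
      (fun n => x ^ (j * n)) (fun n => by positivity) hsgrp
    refine ⟨hsum', ?_⟩
    rw [heq, Summable.tsum_eq_zero_add hsgrp, h0, zero_add]
    simp only [aCount]
  -- basic bounds
  have hy0 : ∀ t : TreeT d, 0 ≤ x ^ treeSize d t := fun t => pow_nonneg hx0 _
  have hyl : ∀ t : TreeT d, x ^ treeSize d t < 1 := fun t => by
    have h1 := one_le_treeSize d t
    exact pow_lt_one₀ hx0 hx1 (by omega)
  have hA1 : Summable (fun t : TreeT d => x ^ treeSize d t) := by
    have := (hA 1 le_rfl).1
    simpa using this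
  -- summability of the log series over trees
  have hgsum : Summable (fun t : TreeT d => -Real.log (1 - x ^ treeSize d t)) := by
    have hle : ∀ t : TreeT d,
        -Real.log (1 - x ^ treeSize d t) ≤ x ^ treeSize d t / (1 - x) := by
      intro t
      have h1 : 0 < 1 - x ^ treeSize d t := by linarith [hyl t]
      have h2 : (0:ℝ) < 1 - x := by linarith
      have hxx : x ^ treeSize d t ≤ x := by
        have := pow_le_pow_of_le_one hx0 hx1.le (one_le_treeSize d t)
        simpa using this
      have hlog : -Real.log (1 - x ^ treeSize d t)
          = Real.log ((1 - x ^ treeSize d t)⁻¹) := by rw [Real.log_inv]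
      rw [hlog]
      calc Real.log ((1 - x ^ treeSize d t)⁻¹)
          ≤ (1 - x ^ treeSize d t)⁻¹ - 1 :=
            Real.log_le_sub_one_of_pos (inv_pos.2 h1)
        _ = x ^ treeSize d t / (1 - x ^ treeSize d t) := by field_simp; ring
        _ ≤ x ^ treeSize d t / (1 - x) :=
            div_le_div_of_nonneg_left (hy0 t) h2 (by linarith)
    apply Summable.of_nonneg_of_le ?_ hle (hA1.div_const (1 - x))
    intro t
    have h1 : 0 < 1 - x ^ treeSize d t := by linarith [hyl t]
    have : Real.log (1 - x ^ treeSize d t) ≤ 0 := Real.log_nonpos h1.le (by linarith [hy0 t])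
    linarith
  -- ENNReal side
  set X := ENNReal.ofReal x with hXdef
  have hset : ∀ n : ℕ,
      {m : Multiset (TreeT d) | (Multiset.map (treeSize d) m).sum = n}
        = {t : TreeT (d + 1) | treeSize (d + 1) t = n + 1} := by
    intro n
    ext m
    have hm : treeSize (d + 1) m = 1 + (Multiset.map (treeSize d) m).sum := rfl
    show (Multiset.map (treeSize d) m).sum = n ↔ treeSize (d + 1) m = n + 1
    rw [hm]
    omega
  have hfibm : ∀ n, {m : Multiset (TreeT d) | (Multiset.map (treeSize d) m).sum = n}.Finite := by
    intro n
    rw [hset n]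
    exact treeT_finite_eq (d + 1) (n + 1)
  have hB' : ∑' m : Multiset (TreeT d), X ^ ((Multiset.map (treeSize d) m).sum)
      = ∑' n : ℕ, (aCount (d + 1) (n + 1) : ℝ≥0∞) * X ^ n := by
    rw [tsum_comp_enn (fun m : Multiset (TreeT d) => (Multiset.map (treeSize d) m).sum)
      hfibm (fun n => X ^ n)]
    refine tsum_congr fun n => ?_
    have h2 : {m : Multiset (TreeT d) | (Multiset.map (treeSize d) m).sum = n}.ncard
        = aCount (d + 1) (n + 1) := by rw [hset n]; simp only [aCount]; rfl
    rw [h2]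
  have hofF : ENNReal.ofReal (∑' n : ℕ, (aCount (d + 1) (n + 1) : ℝ) * x ^ n)
      = ∑' n : ℕ, (aCount (d + 1) (n + 1) : ℝ≥0∞) * X ^ n := by
    rw [ENNReal.ofReal_tsum_of_nonneg (fun n => by positivity) hsum]
    exact tsum_congr fun n => by
      rw [ENNReal.ofReal_mul (Nat.cast_nonneg _), ENNReal.ofReal_natCast,
        ENNReal.ofReal_pow hx0]
  have hiSup : (⨆ s : Finset (TreeT d),
        ∏ t ∈ s, (1 - ENNReal.ofReal (x ^ treeSize d t))⁻¹)
      = ∑' n : ℕ, (aCount (d + 1) (n + 1) : ℝ≥0∞) * X ^ n := by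
    rw [← hB',
      tsum_multiset_eq_iSup (fun m : Multiset (TreeT d) => X ^ ((Multiset.map (treeSize d) m).sum))]
    congr 1
    funext s
    rw [tsum_subms (treeSize d) X s]
    exact Finset.prod_congr rfl fun t _ => by rw [ENNReal.ofReal_pow hx0]
  have hmain := endgame (fun t : TreeT d => x ^ treeSize d t) hy0 hyl hgsum _ hiSup
  rw [← hofF] at hmain
  have hF : ∑' n : ℕ, (aCount (d + 1) (n + 1) : ℝ) * x ^ n
      = Real.exp (∑' t : TreeT d, -Real.log (1 - x ^ treeSize d t)) :=
    ((ENNReal.ofReal_eq_ofReal_iff (Real.exp_pos _).le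
      (tsum_nonneg fun n => by positivity)).1 hmain).symm
  -- expansion of the log series
  have hrow : ∀ t : TreeT d,
      HasSum (fun j : ℕ => (1 / (j + 1) : ℝ) * x ^ ((j + 1) * treeSize d t))
        (-Real.log (1 - x ^ treeSize d t)) := by
    intro t
    have habs : |x ^ treeSize d t| < 1 := by
      rw [abs_of_nonneg (hy0 t)]; exact hyl t
    have h := Real.hasSum_pow_div_log_of_abs_lt_one habs
    have hfun : (fun j : ℕ => (1 / (j + 1) : ℝ) * x ^ ((j + 1) * treeSize d t))
        = fun n : ℕ => (x ^ treeSize d t) ^ (n + 1) / (n + 1) := by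
      funext j
      rw [pow_mul']
      ring
    rw [hfun]
    exact h
  have hH : Summable
      (fun p : TreeT d × ℕ => (1 / (p.2 + 1) : ℝ) * x ^ ((p.2 + 1) * treeSize d p.1)) := by
    apply (summable_prod_of_nonneg (fun p => by positivity)).2
    refine ⟨fun t => (hrow t).summable, ?_⟩
    apply Summable.congr hgsum
    intro t
    exact ((hrow t).tsum_eq).symm
  have hinner : ∀ j : ℕ,
      ∑' t : TreeT d, (1 / (j + 1) : ℝ) * x ^ ((j + 1) * treeSize d t)
        = (1 / (j + 1) : ℝ) * ∑' n : ℕ, (aCount d (n + 1) : ℝ) * x ^ ((j + 1) * (n + 1)) := by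
    intro j
    rw [tsum_mul_left, (hA (j + 1) (by omega)).2]
  have hLswap : ∑' t : TreeT d, -Real.log (1 - x ^ treeSize d t)
      = ∑' j : ℕ, ∑' t : TreeT d, (1 / (j + 1) : ℝ) * x ^ ((j + 1) * treeSize d t) := by
    have h1 : ∑' t : TreeT d, -Real.log (1 - x ^ treeSize d t)
        = ∑' t : TreeT d, ∑' j : ℕ, (1 / (j + 1) : ℝ) * x ^ ((j + 1) * treeSize d t) :=
      tsum_congr fun t => ((hrow t).tsum_eq).symm
    rw [h1]
    exact (Summable.tsum_comm (by exact hH)).symm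
  refine ⟨goal1, ?_, ?_⟩
  · have hswap : Summable
        (fun p : ℕ × TreeT d => (1 / (p.1 + 1) : ℝ) * x ^ ((p.1 + 1) * treeSize d p.2)) :=
      ((Equiv.prodComm ℕ (TreeT d)).summable_iff).2 hH
    have h2 := ((summable_prod_of_nonneg (fun p => by positivity)).1 hswap).2
    exact Summable.congr h2 hinner
  · rw [hF]
    congr 1
    rw [hLswap]
    exact tsum_congr hinner
end

section
/- Let n ≥ 1, let A₁ and Z be symmetric real n×n matrices, let σ ≥ 0, set A₂ := A₁ + σZ, and let X be an n×n doubly stochastic matrix. Then ‖A₁X − XA₂‖_F² ≥ σ²‖Z‖_F² − 2σ·n·max_{i≠j} |(A₁Z − ZA₁)(i,j)| − 2σ²‖Z²‖_F·‖I − X‖_F, where I is the n×n identity matrix and the maximum is over pairs of distinct indices i, j ∈ {1,…,n}. -/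
open Matrix

/-- Squared Frobenius norm. -/
noncomputable def frob2 {n : ℕ} (M : Matrix (Fin n) (Fin n) ℝ) : ℝ :=
  ∑ i, ∑ j, (M i j) ^ 2

/-- Frobenius norm. -/
noncomputable def frobNorm {n : ℕ} (M : Matrix (Fin n) (Fin n) ℝ) : ℝ :=
  Real.sqrt (frob2 M)

/-- Maximum of `|M(i,j)|` over pairs of distinct indices (`0` when no such pair exists). -/
noncomputable def maxOffDiag {n : ℕ} (M : Matrix (Fin n) (Fin n) ℝ) : ℝ :=
  ⨆ p : {q : Fin n × Fin n // q.1 ≠ q.2}, |M p.1.1 p.1.2|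

/-- Doubly stochastic matrices. -/
def Birkhoff (n : ℕ) : Set (Matrix (Fin n) (Fin n) ℝ) :=
  {X | (∀ i j, 0 ≤ X i j) ∧ (∀ i, ∑ j, X i j = 1) ∧ (∀ j, ∑ i, X i j = 1)}

noncomputable def ip {n : ℕ} (A B : Matrix (Fin n) (Fin n) ℝ) : ℝ :=
  ∑ i, ∑ j, A i j * B i j

lemma ip_eq_trace {n : ℕ} (A B : Matrix (Fin n) (Fin n) ℝ) : ip A B = (Aᵀ * B).trace := by
  simp only [ip, trace, diag, mul_apply, transpose_apply]
  rw [Finset.sum_comm]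

lemma frob2_eq_ip {n : ℕ} (A : Matrix (Fin n) (Fin n) ℝ) : frob2 A = ip A A := by
  simp [frob2, ip, sq]

lemma frob2_nonneg {n : ℕ} (A : Matrix (Fin n) (Fin n) ℝ) : 0 ≤ frob2 A := by
  apply Finset.sum_nonneg; intro i _; apply Finset.sum_nonneg; intro j _; positivity

lemma frob2_sub {n : ℕ} (A B : Matrix (Fin n) (Fin n) ℝ) :
    frob2 (A - B) = frob2 A - 2 * ip A B + frob2 B := by
  simp only [frob2, ip, Matrix.sub_apply, Finset.mul_sum, ← Finset.sum_add_distrib,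
    ← Finset.sum_sub_distrib]
  congr 1; ext i; congr 1; ext j; ring

lemma ip_smul_right {n : ℕ} (c : ℝ) (A B : Matrix (Fin n) (Fin n) ℝ) :
    ip A (c • B) = c * ip A B := by
  simp only [ip, Matrix.smul_apply, smul_eq_mul, Finset.mul_sum]
  congr 1; ext i; congr 1; ext j; ring

lemma ip_sub_right {n : ℕ} (A B C : Matrix (Fin n) (Fin n) ℝ) :
    ip A (B - C) = ip A B - ip A C := by
  simp only [ip, Matrix.sub_apply, ← Finset.sum_sub_distrib]
  congr 1; ext i; congr 1; ext j; ring

lemma ip_sub_left {n : ℕ} (A B C : Matrix (Fin n) (Fin n) ℝ) :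
    ip (A - B) C = ip A C - ip B C := by
  simp only [ip, Matrix.sub_apply, ← Finset.sum_sub_distrib]
  congr 1; ext i; congr 1; ext j; ring

lemma frob2_smul {n : ℕ} (c : ℝ) (A : Matrix (Fin n) (Fin n) ℝ) :
    frob2 (c • A) = c ^ 2 * frob2 A := by
  simp only [frob2, Matrix.smul_apply, smul_eq_mul, Finset.mul_sum]
  congr 1; ext i; congr 1; ext j; ring

lemma ip_cauchy {n : ℕ} (A B : Matrix (Fin n) (Fin n) ℝ) :
    ip A B ≤ frobNorm A * frobNorm B := by
  have h : (ip A B) ^ 2 ≤ frob2 A * frob2 B := by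
    have := Finset.sum_mul_sq_le_sq_mul_sq Finset.univ (fun p : Fin n × Fin n => A p.1 p.2)
      (fun p : Fin n × Fin n => B p.1 p.2)
    rw [ip, frob2, frob2, ← Fintype.sum_prod_type' (f := fun i j => A i j * B i j),
      ← Fintype.sum_prod_type' (f := fun i j => A i j ^ 2),
      ← Fintype.sum_prod_type' (f := fun i j => B i j ^ 2)]
    exact this
  calc ip A B ≤ |ip A B| := le_abs_self _
    _ = Real.sqrt ((ip A B) ^ 2) := (Real.sqrt_sq_eq_abs _).symm
    _ ≤ Real.sqrt (frob2 A * frob2 B) := Real.sqrt_le_sqrt h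
    _ = frobNorm A * frobNorm B := by
        rw [frobNorm, frobNorm, Real.sqrt_mul (frob2_nonneg A)]

/-- For symmetric `A₁`, `Z`, `σ ≥ 0`, `A₂ = A₁ + σZ` and doubly stochastic `X`:
`‖A₁X − XA₂‖_F² ≥ σ²‖Z‖_F² − 2σ n max_{i≠j}|(A₁Z − ZA₁)(i,j)| − 2σ²‖Z²‖_F ‖I − X‖_F`. -/
theorem frob_lower_bound (n : ℕ) (hn : 1 ≤ n) (A₁ Z : Matrix (Fin n) (Fin n) ℝ)
    (hA₁ : A₁.IsSymm) (hZ : Z.IsSymm) (σ : ℝ) (hσ : 0 ≤ σ)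
    (A₂ : Matrix (Fin n) (Fin n) ℝ) (hA₂ : A₂ = A₁ + σ • Z)
    (X : Matrix (Fin n) (Fin n) ℝ) (hX : X ∈ Birkhoff n) :
    σ ^ 2 * frob2 Z - 2 * σ * n * maxOffDiag (A₁ * Z - Z * A₁)
        - 2 * σ ^ 2 * frobNorm (Z * Z) * frobNorm (1 - X)
      ≤ frob2 (A₁ * X - X * A₂) := by
  obtain ⟨hpos, hrow, hcol⟩ := hX
  set D := A₁ * X - X * A₁ with hD
  set K := A₁ * Z - Z * A₁ with hK
  set c := maxOffDiag K with hc
  -- rewrite the matrix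
  have hM : A₁ * X - X * A₂ = D - σ • (X * Z) := by
    rw [hA₂, Matrix.mul_add, Matrix.mul_smul, hD]
    abel
  -- trace identity : ip D Z = ip X K
  have hDZ : ip D Z = ip X K := by
    rw [ip_eq_trace, ip_eq_trace]
    have hDT : Dᵀ = Xᵀ * A₁ - A₁ * Xᵀ := by
      rw [hD, transpose_sub, transpose_mul, transpose_mul, hA₁.eq]
    rw [hDT, hK, sub_mul, Matrix.mul_sub, Matrix.trace_sub, Matrix.trace_sub]
    congr 1
    · rw [Matrix.mul_assoc]
    · rw [← Matrix.mul_assoc, (Matrix.trace_mul_cycle Xᵀ Z A₁).symm, Matrix.mul_assoc]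
  -- diagonal of K vanishes
  have hKdiag : ∀ i, K i i = 0 := by
    intro i
    rw [hK]
    simp only [Matrix.sub_apply, mul_apply]
    rw [sub_eq_zero]
    apply Finset.sum_congr rfl
    intro k _
    rw [hA₁.apply i k, hZ.apply k i]
    ring
  -- bounds on maxOffDiag
  have hc0 : 0 ≤ c := by
    rw [hc, maxOffDiag]
    exact Real.iSup_nonneg (fun p => abs_nonneg _)
  have hcle : ∀ i j, i ≠ j → |K i j| ≤ c := by
    intro i j hij
    rw [hc, maxOffDiag]
    exact le_ciSup (f := fun p : {q : Fin n × Fin n // q.1 ≠ q.2} => |K p.1.1 p.1.2|)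
      (Set.Finite.bddAbove (Set.finite_range _)) ⟨(i, j), hij⟩
  -- sum bound : ip X K ≤ n * c
  have hipXK : ip X K ≤ n * c := by
    have h1 : ip X K ≤ ∑ i, ∑ j, X i j * c := by
      apply Finset.sum_le_sum; intro i _
      apply Finset.sum_le_sum; intro j _
      by_cases hij : i = j
      · subst hij
        rw [hKdiag i, mul_zero]
        exact mul_nonneg (hpos i i) hc0
      · exact mul_le_mul_of_nonneg_left ((le_abs_self _).trans (hcle i j hij)) (hpos i j)
    have h2 : ∑ i, ∑ j, X i j * c = n * c := by
      simp only [← Finset.sum_mul, hrow]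
      simp [Finset.sum_const]
    linarith [h1, h2.le, h2.ge]
  -- expansion of the squared norm
  have hExp : frob2 (D - σ • (X * Z))
      = frob2 D - 2 * (σ * ip D (X * Z)) + σ ^ 2 * frob2 (X * Z) := by
    rw [frob2_sub, ip_smul_right, frob2_smul]
  -- split the cross term
  have hSplit : ip D (X * Z) = ip X K + ip D (X * Z - Z) := by
    have : ip D (X * Z) - ip D Z = ip D (X * Z - Z) := (ip_sub_right D (X * Z) Z).symm
    linarith [hDZ]
  -- AM-GM bound on the remainder term
  have hAM : 2 * (σ * ip D (X * Z - Z)) ≤ frob2 D + σ ^ 2 * frob2 (X * Z - Z) := by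
    have h0 : 0 ≤ frob2 (D - σ • (X * Z - Z)) := frob2_nonneg _
    rw [frob2_sub, ip_smul_right, frob2_smul] at h0
    linarith
  -- relating frob2 (X*Z) and frob2 (X*Z - Z)
  have hXZ : frob2 (X * Z) = frob2 (X * Z - Z) + frob2 Z - 2 * ip (Z - X * Z) Z := by
    have h1 : frob2 (X * Z - Z) = frob2 (X * Z) - 2 * ip (X * Z) Z + frob2 Z := frob2_sub _ _
    have h2 : ip (Z - X * Z) Z = ip Z Z - ip (X * Z) Z := ip_sub_left _ _ _
    have h3 : frob2 Z = ip Z Z := frob2_eq_ip Z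
    linarith
  -- the trace identity for the Z² term
  have hZ2 : ip (Z - X * Z) Z = ip (1 - X) (Z * Z) := by
    have e : Z - X * Z = (1 - X) * Z := by rw [Matrix.sub_mul, Matrix.one_mul]
    rw [e, ip_eq_trace, ip_eq_trace, transpose_mul]
    rw [Matrix.mul_assoc, Matrix.trace_mul_comm, ← Matrix.mul_assoc, hZ.eq]
  -- Cauchy-Schwarz
  have hCS : ip (1 - X) (Z * Z) ≤ frobNorm (1 - X) * frobNorm (Z * Z) := ip_cauchy _ _
  -- put everything together
  rw [hM, hExp]
  have hq1 : σ ^ 2 * (frob2 (X * Z - Z) + frob2 Z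
        - 2 * (frobNorm (1 - X) * frobNorm (Z * Z))) ≤ σ ^ 2 * frob2 (X * Z) := by
    apply mul_le_mul_of_nonneg_left _ (sq_nonneg σ)
    linarith
  have hq2 : σ * ip X K ≤ σ * (n * c) := mul_le_mul_of_nonneg_left hipXK hσ
  nlinarith [hq1, hq2, hAM, hSplit, frob2_nonneg D]
end

section
/- Fix ε > 0. For each n ≥ 2, let A₁ and Z be independent GOE(n) matrices. Then the probability that max_{i≠j} |(A₁Z − ZA₁)(i,j)| ≤ n^{ε−1/2}, the maximum being over pairs of distinct indices i, j ∈ {1,…,n}, tends to 1 as n → ∞. -/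
open MeasureTheory ProbabilityTheory Matrix Filter
open scoped ENNReal NNReal Topology

instance matrixMeasurableSpace {n : ℕ} : MeasurableSpace (Matrix (Fin n) (Fin n) ℝ) :=
  inferInstanceAs (MeasurableSpace (Fin n → Fin n → ℝ))

/-- The GOE(n) measure on symmetric real n×n matrices: pushforward of a product of Gaussians
(variance 2/n on the diagonal, 1/n off-diagonal) under the symmetrization map. -/
noncomputable def goeMeasure (n : ℕ) : Measure (Matrix (Fin n) (Fin n) ℝ) :=
  Measure.map
    (fun x : {p : Fin n × Fin n // p.1 ≤ p.2} → ℝ =>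
      Matrix.of fun i j =>
        if h : i ≤ j then x ⟨(i, j), h⟩ else x ⟨(j, i), (le_total i j).resolve_left h⟩)
    (Measure.pi fun p =>
      gaussianReal 0 (if p.1.1 = p.1.2 then (2 / n : ℝ≥0) else (1 / n : ℝ≥0)))

/-! ### Auxiliary lemmas: Gaussian moment generating function -/

open Real in
lemma gpdf_mul_exp {v : ℝ≥0} (hv : v ≠ 0) (a x : ℝ) :
    rexp (a * x) * gaussianPDFReal 0 v x
      = rexp (a ^ 2 * v / 2) * gaussianPDFReal (a * v) v x := by
  have hv' : (v : ℝ) ≠ 0 := by exact_mod_cast hv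
  simp only [gaussianPDFReal]
  rw [mul_left_comm, mul_left_comm (rexp (a ^ 2 * v / 2))]
  congr 1
  rw [← Real.exp_add, ← Real.exp_add]
  congr 1
  field_simp
  ring

open Real in
lemma integrable_exp_mul_gaussian (a : ℝ) (v : ℝ≥0) :
    Integrable (fun x => rexp (a * x)) (gaussianReal 0 v) := by
  rcases eq_or_ne v 0 with rfl | hv
  · rw [gaussianReal_zero_var]
    refine (integrable_const (rexp (a * 0))).congr ?_
    rw [Filter.EventuallyEq, ae_dirac_eq, Filter.eventually_pure]
  · rw [gaussianReal_of_var_ne_zero _ hv]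
    rw [integrable_withDensity_iff (measurable_gaussianPDF _ _)
      (Filter.Eventually.of_forall fun x => by simp [gaussianPDF])]
    apply Integrable.congr
      ((integrable_gaussianPDFReal (a * v) v).const_mul (rexp (a ^ 2 * v / 2)))
    filter_upwards with x
    rw [gaussianPDF_def]
    rw [ENNReal.toReal_ofReal (gaussianPDFReal_nonneg _ _ _)]
    exact (gpdf_mul_exp hv a x).symm

open Real in
lemma integral_exp_mul_gaussian (a : ℝ) (v : ℝ≥0) :
    ∫ x, rexp (a * x) ∂(gaussianReal 0 v) = rexp (a ^ 2 * v / 2) := by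
  rcases eq_or_ne v 0 with rfl | hv
  · rw [gaussianReal_zero_var]
    simp
  · rw [gaussianReal_of_var_ne_zero _ hv,
      show (gaussianPDF 0 v) = (fun x => ((gaussianPDFReal 0 v x).toNNReal : ℝ≥0∞)) from rfl,
      integral_withDensity_eq_integral_smul (measurable_gaussianPDFReal 0 v).real_toNNReal]
    have : ∀ x, (gaussianPDFReal 0 v x).toNNReal • rexp (a * x)
        = rexp (a ^ 2 * v / 2) * gaussianPDFReal (a * v) v x := by
      intro x
      rw [NNReal.smul_def, smul_eq_mul, Real.coe_toNNReal _ (gaussianPDFReal_nonneg _ _ _),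
        mul_comm]
      exact gpdf_mul_exp hv a x
    rw [MeasureTheory.integral_congr_ae (Filter.Eventually.of_forall this)]
    rw [MeasureTheory.integral_const_mul, integral_gaussianPDFReal_eq_one _ hv, mul_one]

/-! ### Fubini for products over `Measure.pi` -/

/-- Wrapper type used to install a custom `MeasureSpace` instance on `ℝ` per coordinate. -/
def RealWrap {ι : Type*} (_ : ι) : Type := ℝ

lemma integral_pi_prod {ι : Type*} [Fintype ι] (m : ι → Measure ℝ)
    (hm : ∀ i, SigmaFinite (m i)) (f : ι → ℝ → ℝ) :
    ∫ x : ι → ℝ, ∏ i, f i (x i) ∂(Measure.pi m) = ∏ i, ∫ s, f i s ∂(m i) := by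
  letI : ∀ i : ι, MeasurableSpace (RealWrap i) := fun _ => inferInstanceAs (MeasurableSpace ℝ)
  letI : ∀ i : ι, MeasureSpace (RealWrap i) := fun i => ⟨m i⟩
  haveI : ∀ i : ι, SigmaFinite (volume : Measure (RealWrap i)) := hm
  exact MeasureTheory.integral_fintype_prod_eq_prod (𝕜 := ℝ) (ι := ι) (E := RealWrap) f

lemma integrable_pi_prod {ι : Type*} [Fintype ι] (m : ι → Measure ℝ)
    (hm : ∀ i, SigmaFinite (m i)) {f : ι → ℝ → ℝ} (hf : ∀ i, Integrable (f i) (m i)) :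
    Integrable (fun x : ι → ℝ => ∏ i, f i (x i)) (Measure.pi m) := by
  letI : ∀ i : ι, MeasurableSpace (RealWrap i) := fun _ => inferInstanceAs (MeasurableSpace ℝ)
  letI : ∀ i : ι, MeasureSpace (RealWrap i) := fun i => ⟨m i⟩
  haveI : ∀ i : ι, SigmaFinite (volume : Measure (RealWrap i)) := hm
  exact MeasureTheory.Integrable.fintype_prod_dep (𝕜 := ℝ) (E := RealWrap) hf

/-! ### Sub-Gaussian tail bound for linear functionals of product Gaussians -/

open Real in
lemma pi_gaussian_linear_tail {ι : Type*} [Fintype ι] (σ : ι → ℝ≥0) (c : ι → ℝ)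
    {s v : ℝ} (hs : 0 < s) (hv : 0 < v) (hσ : ∑ i, c i ^ 2 * (σ i : ℝ) ≤ v) :
    (Measure.pi (fun i => gaussianReal 0 (σ i))) {x | s ≤ ∑ i, c i * x i}
      ≤ ENNReal.ofReal (rexp (-(s ^ 2) / (2 * v))) := by
  set μ := Measure.pi (fun i => gaussianReal 0 (σ i)) with hμ
  haveI : IsProbabilityMeasure μ := by rw [hμ]; infer_instance
  set t : ℝ := s / v with htdef
  have ht : 0 ≤ t := div_nonneg hs.le hv.le
  have hexp : ∀ x : ι → ℝ, rexp (t * ∑ i, c i * x i) = ∏ i, rexp (t * c i * x i) := by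
    intro x
    rw [← Real.exp_sum, Finset.mul_sum]
    ring_nf
  have h_int : Integrable (fun x : ι → ℝ => rexp (t * ∑ i, c i * x i)) μ := by
    apply (integrable_pi_prod _ (fun i => inferInstance)
      (f := fun i s => rexp (t * c i * s)) (fun i => integrable_exp_mul_gaussian _ _)).congr
    filter_upwards with x using (hexp x).symm
  have hmgf : mgf (fun x : ι → ℝ => ∑ i, c i * x i) μ t ≤ rexp (t ^ 2 * v / 2) := by
    rw [mgf]
    rw [MeasureTheory.integral_congr_ae (Filter.Eventually.of_forall hexp)]
    rw [integral_pi_prod _ (fun i => inferInstance) (fun i s => rexp (t * c i * s))]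
    have : ∀ i ∈ Finset.univ, ∫ x, rexp (t * c i * x) ∂(gaussianReal 0 (σ i))
        = rexp ((t * c i) ^ 2 * (σ i : ℝ) / 2) := fun i _ => integral_exp_mul_gaussian _ _
    rw [Finset.prod_congr rfl this, ← Real.exp_sum]
    apply Real.exp_le_exp.2
    have : ∑ i, (t * c i) ^ 2 * (σ i : ℝ) / 2 = t ^ 2 / 2 * ∑ i, c i ^ 2 * (σ i : ℝ) := by
      rw [Finset.mul_sum]; congr 1; ext i; ring
    rw [this]
    calc t ^ 2 / 2 * ∑ i, c i ^ 2 * (σ i : ℝ) ≤ t ^ 2 / 2 * v := by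
          apply mul_le_mul_of_nonneg_left hσ (by positivity)
      _ = t ^ 2 * v / 2 := by ring
  have chern := measure_ge_le_exp_mul_mgf (X := fun x : ι → ℝ => ∑ i, c i * x i) (μ := μ)
    s ht h_int
  have hbound : rexp (-t * s) * mgf (fun x : ι → ℝ => ∑ i, c i * x i) μ t
      ≤ rexp (-(s ^ 2) / (2 * v)) := by
    calc rexp (-t * s) * mgf (fun x : ι → ℝ => ∑ i, c i * x i) μ t
        ≤ rexp (-t * s) * rexp (t ^ 2 * v / 2) := by
          apply mul_le_mul_of_nonneg_left hmgf (Real.exp_pos _).le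
      _ = rexp (-t * s + t ^ 2 * v / 2) := (Real.exp_add _ _).symm
      _ = rexp (-(s ^ 2) / (2 * v)) := by
          congr 1
          rw [htdef]
          field_simp
          ring
  have := chern.trans hbound
  rw [← ENNReal.ofReal_toReal (measure_ne_top μ _)]
  exact ENNReal.ofReal_le_ofReal this

open Real in
lemma pi_gaussian_linear_tail_abs {ι : Type*} [Fintype ι] (σ : ι → ℝ≥0) (c : ι → ℝ)
    {s v : ℝ} (hs : 0 < s) (hv : 0 < v) (hσ : ∑ i, c i ^ 2 * (σ i : ℝ) ≤ v) :
    (Measure.pi (fun i => gaussianReal 0 (σ i))) {x | s ≤ |∑ i, c i * x i|}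
      ≤ 2 * ENNReal.ofReal (rexp (-(s ^ 2) / (2 * v))) := by
  have hsub : {x : ι → ℝ | s ≤ |∑ i, c i * x i|}
      ⊆ {x | s ≤ ∑ i, c i * x i} ∪ {x | s ≤ ∑ i, (-c) i * x i} := by
    intro x hx
    simp only [Set.mem_setOf_eq, Set.mem_union, Pi.neg_apply, neg_mul, ← Finset.sum_neg_distrib]
    rcases abs_cases (∑ i, c i * x i) with ⟨h1, _⟩ | ⟨h1, _⟩
    · left; rwa [← h1]
    · right; rw [Finset.sum_neg_distrib, ← h1]; exact hx
  calc (Measure.pi (fun i => gaussianReal 0 (σ i))) {x | s ≤ |∑ i, c i * x i|}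
      ≤ (Measure.pi (fun i => gaussianReal 0 (σ i))) ({x | s ≤ ∑ i, c i * x i}
        ∪ {x | s ≤ ∑ i, (-c) i * x i}) := measure_mono hsub
    _ ≤ (Measure.pi (fun i => gaussianReal 0 (σ i))) {x | s ≤ ∑ i, c i * x i}
        + (Measure.pi (fun i => gaussianReal 0 (σ i))) {x | s ≤ ∑ i, (-c) i * x i} :=
          measure_union_le _ _
    _ ≤ ENNReal.ofReal (rexp (-(s ^ 2) / (2 * v))) + ENNReal.ofReal (rexp (-(s ^ 2) / (2 * v))) := by
        gcongr
        · exact pi_gaussian_linear_tail σ c hs hv hσ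
        · apply pi_gaussian_linear_tail σ (-c) hs hv
          simpa only [Pi.neg_apply, neg_sq] using hσ
    _ = 2 * ENNReal.ofReal (rexp (-(s ^ 2) / (2 * v))) := (two_mul _).symm

/-! ### Combinatorics of the symmetrization map -/

abbrev Idx (n : ℕ) := {p : Fin n × Fin n // p.1 ≤ p.2}

noncomputable def symMat {n : ℕ} (x : Idx n → ℝ) : Matrix (Fin n) (Fin n) ℝ :=
  Matrix.of fun i j => if h : i ≤ j then x ⟨(i, j), h⟩ else x ⟨(j, i), le_of_not_ge h⟩

def eIdx {n : ℕ} (a b : Fin n) : Idx n :=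
  if h : a ≤ b then ⟨(a, b), h⟩ else ⟨(b, a), le_of_not_ge h⟩

lemma symMat_apply {n : ℕ} (x : Idx n → ℝ) (a b : Fin n) : symMat x a b = x (eIdx a b) := by
  unfold symMat eIdx
  by_cases h : a ≤ b <;> simp [h]

lemma eIdx_fst_inj {n : ℕ} (a : Fin n) : Function.Injective (eIdx (n := n) a) := by
  intro k k' h
  unfold eIdx at h
  try dsimp only at h
  split_ifs at h <;>
    simp only [Subtype.mk.injEq, Prod.mk.injEq, Fin.ext_iff] at h <;>
    rename_i h1 h2 <;>
    simp only [Fin.le_def, not_le] at h1 h2 <;>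
    exact Fin.ext (by omega)

lemma eIdx_snd_inj {n : ℕ} (b : Fin n) : Function.Injective (fun k => eIdx (n := n) k b) := by
  intro k k' h
  unfold eIdx at h
  try dsimp only at h
  split_ifs at h <;>
    simp only [Subtype.mk.injEq, Prod.mk.injEq, Fin.ext_iff] at h <;>
    rename_i h1 h2 <;>
    simp only [Fin.le_def, not_le] at h1 h2 <;>
    exact Fin.ext (by omega)

/-- Coefficient of coordinate `q` in the `(i,j)` entry of the commutator, viewed as a linear
function of the first matrix's coordinates (the second matrix being `symMat y`). -/
noncomputable def ccoef {n : ℕ} (i j : Fin n) (y : Idx n → ℝ) (q : Idx n) : ℝ :=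
  ∑ k, ((if eIdx i k = q then symMat y k j else 0) - (if eIdx k j = q then symMat y i k else 0))

lemma comm_entry_eq {n : ℕ} (x y : Idx n → ℝ) (i j : Fin n) :
    (symMat x * symMat y - symMat y * symMat x) i j = ∑ q, ccoef i j y q * x q := by
  have : ∀ q, ccoef i j y q * x q
      = ∑ k, ((if eIdx i k = q then symMat y k j * x q else 0)
        - (if eIdx k j = q then symMat y i k * x q else 0)) := by
    intro q
    rw [ccoef, Finset.sum_mul]
    congr 1; ext k
    rw [sub_mul, ite_mul, ite_mul]
    simp
  rw [Finset.sum_congr rfl fun q _ => this q, Finset.sum_comm]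
  rw [Matrix.sub_apply, Matrix.mul_apply, Matrix.mul_apply, ← Finset.sum_sub_distrib]
  congr 1; ext k
  rw [Finset.sum_sub_distrib, Finset.sum_ite_eq, Finset.sum_ite_eq]
  simp only [Finset.mem_univ, if_true]
  rw [symMat_apply x i k, symMat_apply x k j]
  ring

lemma ccoef_abs_le {n : ℕ} {M : ℝ} (hM : 0 ≤ M) (i j : Fin n) {y : Idx n → ℝ}
    (hy : ∀ q, |y q| ≤ M) (q : Idx n) : |ccoef i j y q| ≤ 2 * M := by
  have hsm : ∀ a b, |symMat y a b| ≤ M := by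
    intro a b; rw [symMat_apply]; exact hy _
  have h1 : ∀ (f : Fin n → Idx n), Function.Injective f → ∀ (w : Fin n → ℝ),
      (∀ k, |w k| ≤ M) → |∑ k, if f k = q then w k else 0| ≤ M := by
    intro f hf w hw
    calc |∑ k, if f k = q then w k else 0| ≤ ∑ k, |if f k = q then w k else 0| :=
          Finset.abs_sum_le_sum_abs _ _
      _ ≤ ∑ k, if f k = q then M else 0 := by
          apply Finset.sum_le_sum
          intro k _
          split_ifs
          · exact hw k
          · simp
      _ = (Finset.univ.filter (fun k => f k = q)).card • M := by
          rw [← Finset.sum_filter, Finset.sum_const]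
      _ ≤ 1 * M := by
          rw [nsmul_eq_mul]
          apply mul_le_mul_of_nonneg_right _ hM
          have : (Finset.univ.filter (fun k => f k = q)).card ≤ 1 := by
            apply Finset.card_le_one.2
            intro a ha b hb
            simp only [Finset.mem_filter] at ha hb
            exact hf (ha.2.trans hb.2.symm)
          exact_mod_cast this
      _ = M := one_mul M
  rw [ccoef, Finset.sum_sub_distrib]
  calc |(∑ k, if eIdx i k = q then symMat y k j else 0)
        - ∑ k, if eIdx k j = q then symMat y i k else 0|
      ≤ |∑ k, if eIdx i k = q then symMat y k j else 0|
        + |∑ k, if eIdx k j = q then symMat y i k else 0| := abs_sub _ _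
    _ ≤ M + M := add_le_add
        (h1 _ (eIdx_fst_inj i) _ fun k => hsm k j)
        (h1 _ (eIdx_snd_inj j) _ fun k => hsm i k)
    _ = 2 * M := by ring

lemma ccoef_sum_abs_le {n : ℕ} {M : ℝ} (hM : 0 ≤ M) (i j : Fin n) {y : Idx n → ℝ}
    (hy : ∀ q, |y q| ≤ M) : ∑ q, |ccoef i j y q| ≤ 2 * n * M := by
  have hsm : ∀ a b, |symMat y a b| ≤ M := by
    intro a b; rw [symMat_apply]; exact hy _
  calc ∑ q, |ccoef i j y q|
      ≤ ∑ q, ∑ k, (|if eIdx i k = q then symMat y k j else 0|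
          + |if eIdx k j = q then symMat y i k else 0|) := by
        apply Finset.sum_le_sum
        intro q _
        rw [ccoef]
        refine (Finset.abs_sum_le_sum_abs _ _).trans (Finset.sum_le_sum fun k _ => ?_)
        exact abs_sub _ _
    _ = ∑ k, ∑ q, (|if eIdx i k = q then symMat y k j else 0|
          + |if eIdx k j = q then symMat y i k else 0|) := Finset.sum_comm
    _ = ∑ k : Fin n, (|symMat y k j| + |symMat y i k|) := by
        apply Finset.sum_congr rfl
        intro k _
        rw [Finset.sum_add_distrib]
        congr 1
        · have : ∀ q, |if eIdx i k = q then symMat y k j else 0|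
              = if eIdx i k = q then |symMat y k j| else 0 := by
            intro q; split_ifs <;> simp
          rw [Finset.sum_congr rfl fun q _ => this q, Finset.sum_ite_eq]
          simp
        · have : ∀ q, |if eIdx k j = q then symMat y i k else 0|
              = if eIdx k j = q then |symMat y i k| else 0 := by
            intro q; split_ifs <;> simp
          rw [Finset.sum_congr rfl fun q _ => this q, Finset.sum_ite_eq]
          simp
    _ ≤ ∑ k : Fin n, (M + M) := Finset.sum_le_sum fun k _ => add_le_add (hsm k j) (hsm i k)
    _ = 2 * n * M := by
        rw [Finset.sum_const, Finset.card_univ, Fintype.card_fin, nsmul_eq_mul]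
        ring

lemma ccoef_sum_sq_le {n : ℕ} {M : ℝ} (hM : 0 ≤ M) (i j : Fin n) {y : Idx n → ℝ}
    (hy : ∀ q, |y q| ≤ M) : ∑ q, (ccoef i j y q) ^ 2 ≤ 4 * n * M ^ 2 := by
  calc ∑ q, (ccoef i j y q) ^ 2 ≤ ∑ q, (2 * M) * |ccoef i j y q| := by
        apply Finset.sum_le_sum
        intro q _
        rw [(sq_abs (ccoef i j y q)).symm, sq]
        exact mul_le_mul_of_nonneg_right (ccoef_abs_le hM i j hy q) (abs_nonneg _)
    _ = (2 * M) * ∑ q, |ccoef i j y q| := (Finset.mul_sum _ _ _).symm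
    _ ≤ (2 * M) * (2 * n * M) :=
        mul_le_mul_of_nonneg_left (ccoef_sum_abs_le hM i j hy) (by positivity)
    _ = 4 * n * M ^ 2 := by ring

/-! ### The GOE measure as a pushforward -/

noncomputable def sigmaVec (n : ℕ) (p : Idx n) : ℝ≥0 :=
  if p.1.1 = p.1.2 then (2 / n : ℝ≥0) else (1 / n : ℝ≥0)

noncomputable def muPi (n : ℕ) : Measure (Idx n → ℝ) :=
  Measure.pi fun p => gaussianReal 0 (sigmaVec n p)

instance (n : ℕ) : IsProbabilityMeasure (muPi n) := by unfold muPi; infer_instance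

lemma goe_eq (n : ℕ) : goeMeasure n = Measure.map symMat (muPi n) := rfl

lemma sigmaVec_le {n : ℕ} (hn : 1 ≤ n) (p : Idx n) : (sigmaVec n p : ℝ) ≤ 2 / n := by
  have hN : (0:ℝ) < n := by exact_mod_cast hn
  unfold sigmaVec
  split_ifs <;> push_cast
  · exact le_rfl
  · exact (div_le_div_iff_of_pos_right hN).mpr one_le_two

lemma measurable_symMat {n : ℕ} : Measurable (symMat (n := n)) := by
  apply measurable_pi_lambda
  intro i
  apply measurable_pi_lambda
  intro j
  have : (fun x : Idx n → ℝ => symMat x i j) = fun x => x (eIdx i j) :=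
    funext fun x => symMat_apply x i j
  exact this ▸ measurable_pi_apply _

lemma measurable_pre_comm_entry {n : ℕ} (i j : Fin n) :
    Measurable fun p : (Idx n → ℝ) × (Idx n → ℝ) =>
      (symMat p.1 * symMat p.2 - symMat p.2 * symMat p.1) i j := by
  have h1 : ∀ (a b : Fin n), Measurable fun x : Idx n → ℝ => symMat x a b := by
    intro a b
    have : (fun x : Idx n → ℝ => symMat x a b) = fun x => x (eIdx a b) :=
      funext fun x => symMat_apply x a b
    exact this ▸ measurable_pi_apply _
  simp only [Matrix.sub_apply, Matrix.mul_apply]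
  exact (Finset.measurable_sum _ fun k _ =>
      ((h1 i k).comp measurable_fst).mul ((h1 k j).comp measurable_snd)).sub
    (Finset.measurable_sum _ fun k _ =>
      ((h1 i k).comp measurable_snd).mul ((h1 k j).comp measurable_fst))

lemma measurable_mat_comm_entry {n : ℕ} (i j : Fin n) :
    Measurable fun p : Matrix (Fin n) (Fin n) ℝ × Matrix (Fin n) (Fin n) ℝ =>
      (p.1 * p.2 - p.2 * p.1) i j := by
  have h1 : ∀ (a b : Fin n), Measurable fun A : Matrix (Fin n) (Fin n) ℝ => A a b := by
    intro a b
    exact (measurable_pi_apply b).comp (measurable_pi_apply a)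
  simp only [Matrix.sub_apply, Matrix.mul_apply]
  exact (Finset.measurable_sum _ fun k _ =>
      ((h1 i k).comp measurable_fst).mul ((h1 k j).comp measurable_snd)).sub
    (Finset.measurable_sum _ fun k _ =>
      ((h1 i k).comp measurable_snd).mul ((h1 k j).comp measurable_fst))

open Real in
lemma pair_bound {ε : ℝ} (hε : 0 < ε) {n : ℕ} (hn : 1 ≤ n) (i j : Fin n) :
    (muPi n).prod (muPi n)
      {p : (Idx n → ℝ) × (Idx n → ℝ) |
        (n : ℝ) ^ (ε - 1/2) < |(symMat p.1 * symMat p.2 - symMat p.2 * symMat p.1) i j|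
          ∧ ∀ q, |p.2 q| ≤ (n : ℝ) ^ ((ε - 1)/2)}
      ≤ 2 * ENNReal.ofReal (rexp (-((n:ℝ)^ε)/16)) := by
  have hN : (0:ℝ) < n := by exact_mod_cast hn
  set t : ℝ := (n : ℝ) ^ (ε - 1/2) with htdef
  set M : ℝ := (n : ℝ) ^ ((ε - 1)/2) with hMdef
  have ht : 0 < t := Real.rpow_pos_of_pos hN _
  have hM : 0 < M := Real.rpow_pos_of_pos hN _
  have hM2 : M ^ 2 = (n:ℝ) ^ (ε - 1) := by
    rw [hMdef, ← Real.rpow_natCast ((n:ℝ) ^ ((ε - 1)/2)) 2, ← Real.rpow_mul hN.le]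
    norm_num
  have ht2 : t ^ 2 = (n:ℝ) ^ ε * M ^ 2 := by
    rw [hM2, htdef, ← Real.rpow_natCast ((n:ℝ) ^ (ε - 1/2)) 2, ← Real.rpow_mul hN.le,
      ← Real.rpow_add hN]
    congr 1; ring
  have hexp : -(t ^ 2) / (2 * (8 * M ^ 2)) = -((n:ℝ)^ε)/16 := by
    rw [ht2]
    field_simp
    ring
  set E := {p : (Idx n → ℝ) × (Idx n → ℝ) |
      t < |(symMat p.1 * symMat p.2 - symMat p.2 * symMat p.1) i j| ∧ ∀ q, |p.2 q| ≤ M} with hEdef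
  have hmeasE : MeasurableSet E := by
    have : E = {p : (Idx n → ℝ) × (Idx n → ℝ) |
        t < |(symMat p.1 * symMat p.2 - symMat p.2 * symMat p.1) i j|}
        ∩ ⋂ q : Idx n, {p : (Idx n → ℝ) × (Idx n → ℝ) | |p.2 q| ≤ M} := by
      ext p
      simp only [hEdef, Set.mem_setOf_eq, Set.mem_inter_iff, Set.mem_iInter]
    rw [this]
    exact (measurableSet_lt measurable_const (measurable_pre_comm_entry i j).abs).inter
      (MeasurableSet.iInter fun q => measurableSet_le
        (by fun_prop : Measurable fun p : (Idx n → ℝ) × (Idx n → ℝ) => |p.2 q|) measurable_const)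
  rw [Measure.prod_apply_symm hmeasE]
  have hinner : ∀ y : Idx n → ℝ,
      muPi n ((fun x => (x, y)) ⁻¹' E) ≤ 2 * ENNReal.ofReal (rexp (-((n:ℝ)^ε)/16)) := by
    intro y
    by_cases hy : ∀ q, |y q| ≤ M
    · have hsub : ((fun x => (x, y)) ⁻¹' E) ⊆ {x | t ≤ |∑ q, ccoef i j y q * x q|} := by
        intro x hx
        simp only [hEdef, Set.mem_preimage, Set.mem_setOf_eq] at hx
        rw [Set.mem_setOf_eq, ← comm_entry_eq]
        exact hx.1.le
      refine (measure_mono hsub).trans ?_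
      have hσ : ∑ q, (ccoef i j y q) ^ 2 * (sigmaVec n q : ℝ) ≤ 8 * M ^ 2 := by
        calc ∑ q, (ccoef i j y q) ^ 2 * (sigmaVec n q : ℝ)
            ≤ ∑ q, (ccoef i j y q) ^ 2 * (2 / n) := by
              apply Finset.sum_le_sum
              intro q _
              exact mul_le_mul_of_nonneg_left (sigmaVec_le hn q) (sq_nonneg _)
          _ = (∑ q, (ccoef i j y q) ^ 2) * (2 / n) := (Finset.sum_mul _ _ _).symm
          _ ≤ (4 * n * M ^ 2) * (2 / n) := by
              apply mul_le_mul_of_nonneg_right (ccoef_sum_sq_le hM.le i j hy) (by positivity)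
          _ = 8 * M ^ 2 := by field_simp; ring
      have htail := pi_gaussian_linear_tail_abs (sigmaVec n) (ccoef i j y) ht
        (by positivity : (0:ℝ) < 8 * M ^ 2) hσ
      rw [hexp] at htail
      exact htail
    · have : ((fun x => (x, y)) ⁻¹' E) = ∅ := by
        ext x
        simp only [hEdef, Set.mem_preimage, Set.mem_setOf_eq, Set.mem_empty_iff_false]
        tauto
      rw [this]
      simp
  calc ∫⁻ y, muPi n ((fun x => (x, y)) ⁻¹' E) ∂(muPi n)
      ≤ ∫⁻ _, 2 * ENNReal.ofReal (rexp (-((n:ℝ)^ε)/16)) ∂(muPi n) := lintegral_mono hinner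
    _ = 2 * ENNReal.ofReal (rexp (-((n:ℝ)^ε)/16)) := by
        rw [lintegral_const, measure_univ, mul_one]

open Real in
lemma bad_bound {ε : ℝ} (hε : 0 < ε) {n : ℕ} (hn : 1 ≤ n) :
    muPi n {y : Idx n → ℝ | ¬ ∀ q, |y q| ≤ (n : ℝ) ^ ((ε - 1)/2)}
      ≤ ((n : ℝ≥0∞) ^ 2) * (2 * ENNReal.ofReal (rexp (-((n:ℝ)^ε)/4))) := by
  have hN : (0:ℝ) < n := by exact_mod_cast hn
  set M : ℝ := (n : ℝ) ^ ((ε - 1)/2) with hMdef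
  have hM : 0 < M := Real.rpow_pos_of_pos hN _
  have hM2 : M ^ 2 = (n:ℝ) ^ (ε - 1) := by
    rw [hMdef, ← Real.rpow_natCast ((n:ℝ) ^ ((ε - 1)/2)) 2, ← Real.rpow_mul hN.le]
    norm_num
  have hexp : -(M ^ 2) / (2 * (2 / (n:ℝ))) = -((n:ℝ)^ε)/4 := by
    have hmul : M ^ 2 * n = (n:ℝ) ^ ε := by
      rw [hM2, ← Real.rpow_add_one hN.ne']
      norm_num
    rw [show -(M ^ 2) / (2 * (2 / (n:ℝ))) = -(M ^ 2 * n) / 4 by field_simp; ring, hmul]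
  have hcover : {y : Idx n → ℝ | ¬ ∀ q, |y q| ≤ M} ⊆ ⋃ q : Idx n, {y | M ≤ |y q|} := by
    intro y hy
    push_neg at hy
    obtain ⟨q, hq⟩ := hy
    exact Set.mem_iUnion.2 ⟨q, hq.le⟩
  refine (measure_mono hcover).trans ((measure_iUnion_le _).trans ?_)
  rw [tsum_fintype]
  have hq : ∀ q : Idx n, muPi n {y : Idx n → ℝ | M ≤ |y q|}
      ≤ 2 * ENNReal.ofReal (rexp (-((n:ℝ)^ε)/4)) := by
    intro q
    have hset : {y : Idx n → ℝ | M ≤ |y q|}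
        = {y : Idx n → ℝ | M ≤ |∑ q', (if q' = q then (1:ℝ) else 0) * y q'|} := by
      ext y
      simp [ite_mul]
    have hσ : ∑ q', (if q' = q then (1:ℝ) else 0) ^ 2 * (sigmaVec n q' : ℝ) ≤ 2 / (n:ℝ) := by
      have h1 : ∀ q', (if q' = q then (1:ℝ) else 0) ^ 2 * (sigmaVec n q' : ℝ)
          = if q' = q then (sigmaVec n q' : ℝ) else 0 := by
        intro q'; split_ifs <;> simp
      rw [Finset.sum_congr rfl fun q' _ => h1 q', Finset.sum_ite_eq' Finset.univ q]
      simpa using sigmaVec_le hn q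
    have htail := pi_gaussian_linear_tail_abs (sigmaVec n)
      (fun q' => if q' = q then (1:ℝ) else 0) hM
      (by positivity : (0:ℝ) < 2 / (n:ℝ)) hσ
    rw [hexp] at htail
    rw [hset]
    exact htail
  calc ∑ q : Idx n, muPi n {y : Idx n → ℝ | M ≤ |y q|}
      ≤ ∑ _q : Idx n, 2 * ENNReal.ofReal (rexp (-((n:ℝ)^ε)/4)) :=
        Finset.sum_le_sum fun q _ => hq q
    _ = (Fintype.card (Idx n) : ℝ≥0∞) * (2 * ENNReal.ofReal (rexp (-((n:ℝ)^ε)/4))) := by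
        rw [Finset.sum_const, Finset.card_univ, nsmul_eq_mul]
    _ ≤ ((n : ℝ≥0∞) ^ 2) * (2 * ENNReal.ofReal (rexp (-((n:ℝ)^ε)/4))) := by
        gcongr
        have hcard : Fintype.card (Idx n) ≤ n ^ 2 := by
          calc Fintype.card (Idx n) ≤ Fintype.card (Fin n × Fin n) := Fintype.card_subtype_le _
            _ = n ^ 2 := by simp [sq]
        calc (Fintype.card (Idx n) : ℝ≥0∞) ≤ ((n ^ 2 : ℕ) : ℝ≥0∞) := by exact_mod_cast hcard
          _ = (n : ℝ≥0∞) ^ 2 := by push_cast; rfl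

/-- For independent GOE matrices `A₁, Z`, the maximal off-diagonal entry of the commutator
`A₁Z − ZA₁` is at most `n^{ε−1/2}` with probability tending to 1. -/
theorem commutator_offdiag_small_whp (ε : ℝ) (hε : 0 < ε) :
    Tendsto
      (fun n : ℕ =>
        ((goeMeasure n).prod (goeMeasure n))
          {p : Matrix (Fin n) (Fin n) ℝ × Matrix (Fin n) (Fin n) ℝ |
            maxOffDiag (p.1 * p.2 - p.2 * p.1) ≤ (n : ℝ) ^ (ε - 1 / 2)})
      atTop (𝓝 1) := by
  classical
  set D : ℕ → ℝ≥0∞ :=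
    fun n => 4 * ((n : ℝ≥0∞) ^ 2 * ENNReal.ofReal (Real.exp (-((n:ℝ)^ε)/16))) with hDdef
  have hDlim : Tendsto D atTop (𝓝 0) := by
    have hreal : Tendsto (fun n : ℕ => 4 * ((n:ℝ) ^ 2 * Real.exp (-((n:ℝ)^ε)/16)))
        atTop (𝓝 0) := by
      have base := tendsto_rpow_mul_exp_neg_mul_atTop_nhds_zero (2/ε) (1/16) (by norm_num)
      have comp := base.comp ((tendsto_rpow_atTop hε).comp tendsto_natCast_atTop_atTop)
      have heq : ∀ n : ℕ,
          ((fun x : ℝ => x ^ (2/ε) * Real.exp (-(1/16) * x))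
            ∘ ((fun x : ℝ => x ^ ε) ∘ (Nat.cast : ℕ → ℝ))) n
          = (n:ℝ) ^ 2 * Real.exp (-((n:ℝ)^ε)/16) := by
        intro n
        simp only [Function.comp_apply]
        congr 1
        · rw [← Real.rpow_natCast (n:ℝ) 2, ← Real.rpow_mul (Nat.cast_nonneg n)]
          congr 1
          field_simp
          norm_num
        · congr 1
          ring
      have h4 := (comp.congr heq).const_mul (4:ℝ)
      simpa using h4
    have hDeq : ∀ n : ℕ, D n = ENNReal.ofReal (4 * ((n:ℝ) ^ 2 * Real.exp (-((n:ℝ)^ε)/16))) := by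
      intro n
      rw [hDdef]
      rw [ENNReal.ofReal_mul (by norm_num : (0:ℝ) ≤ 4),
        ENNReal.ofReal_mul (by positivity : (0:ℝ) ≤ (n:ℝ) ^ 2),
        ENNReal.ofReal_pow (Nat.cast_nonneg n), ENNReal.ofReal_natCast,
        ENNReal.ofReal_ofNat]
    refine Tendsto.congr (fun n => (hDeq n).symm) ?_
    have h0 := ENNReal.tendsto_ofReal (f := atTop) hreal
    simpa using h0
  have hprob : ∀ n : ℕ, IsProbabilityMeasure ((goeMeasure n).prod (goeMeasure n)) := by
    intro n
    haveI : IsProbabilityMeasure (goeMeasure n) := by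
      rw [goe_eq]
      exact Measure.isProbabilityMeasure_map measurable_symMat.aemeasurable
    infer_instance
  have hmain : ∀ n : ℕ, 2 ≤ n →
      (1:ℝ≥0∞) - D n ≤ ((goeMeasure n).prod (goeMeasure n))
        {p : Matrix (Fin n) (Fin n) ℝ × Matrix (Fin n) (Fin n) ℝ |
          maxOffDiag (p.1 * p.2 - p.2 * p.1) ≤ (n : ℝ) ^ (ε - 1 / 2)} := by
    intro n hn2
    have hn1 : 1 ≤ n := le_trans (by norm_num) hn2
    have hN : (0:ℝ) < n := by exact_mod_cast hn1
    haveI hne : Nonempty {q : Fin n × Fin n // q.1 ≠ q.2} :=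
      ⟨⟨(⟨0, by omega⟩, ⟨1, by omega⟩),
        fun h => absurd (congrArg Fin.val h) (by norm_num)⟩⟩
    set t : ℝ := (n : ℝ) ^ (ε - 1/2) with htdef
    set M : ℝ := (n : ℝ) ^ ((ε - 1)/2) with hMdef
    set S : Set (Matrix (Fin n) (Fin n) ℝ × Matrix (Fin n) (Fin n) ℝ) :=
      {p | maxOffDiag (p.1 * p.2 - p.2 * p.1) ≤ t} with hSdef
    have hchar : ∀ Mat : Matrix (Fin n) (Fin n) ℝ, maxOffDiag Mat ≤ t ↔
        ∀ pq : {q : Fin n × Fin n // q.1 ≠ q.2}, |Mat pq.1.1 pq.1.2| ≤ t := by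
      intro Mat
      exact ciSup_le_iff (Set.Finite.bddAbove (Set.finite_range _))
    have hS_eq : S = ⋂ pq : {q : Fin n × Fin n // q.1 ≠ q.2},
        {p : Matrix (Fin n) (Fin n) ℝ × Matrix (Fin n) (Fin n) ℝ |
          |(p.1 * p.2 - p.2 * p.1) pq.1.1 pq.1.2| ≤ t} := by
      ext p
      simp only [hSdef, Set.mem_setOf_eq, Set.mem_iInter]
      exact hchar _
    have hSmeas : MeasurableSet S := by
      rw [hS_eq]
      exact MeasurableSet.iInter fun pq =>
        measurableSet_le (measurable_mat_comm_entry _ _).abs measurable_const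
    haveI := hprob n
    have hmap : ((goeMeasure n).prod (goeMeasure n)) Sᶜ
        = ((muPi n).prod (muPi n)) (Prod.map symMat symMat ⁻¹' Sᶜ) := by
      rw [goe_eq, Measure.map_prod_map _ _ measurable_symMat measurable_symMat,
        Measure.map_apply (measurable_symMat.prodMap measurable_symMat) hSmeas.compl]
    have hWsubset : (Prod.map symMat symMat ⁻¹' Sᶜ) ⊆
        ({p : (Idx n → ℝ) × (Idx n → ℝ) | ¬ ∀ q, |p.2 q| ≤ M})
        ∪ ⋃ pq : {q : Fin n × Fin n // q.1 ≠ q.2},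
            {p : (Idx n → ℝ) × (Idx n → ℝ) |
              t < |(symMat p.1 * symMat p.2 - symMat p.2 * symMat p.1) pq.1.1 pq.1.2|
                ∧ ∀ q, |p.2 q| ≤ M} := by
      intro p hp
      simp only [hSdef, Set.mem_preimage, Set.mem_compl_iff, Set.mem_setOf_eq,
        Prod.map_apply] at hp
      rw [hchar] at hp
      push_neg at hp
      obtain ⟨pq, hpq⟩ := hp
      by_cases hgood : ∀ q, |p.2 q| ≤ M
      · exact Set.mem_union_right _ (Set.mem_iUnion.2 ⟨pq, ⟨hpq, hgood⟩⟩)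
      · exact Set.mem_union_left _ hgood
    have hcompl_bound : ((muPi n).prod (muPi n)) (Prod.map symMat symMat ⁻¹' Sᶜ) ≤ D n := by
      refine (measure_mono hWsubset).trans ((measure_union_le _ _).trans ?_)
      have h1 : ((muPi n).prod (muPi n)) {p : (Idx n → ℝ) × (Idx n → ℝ) | ¬ ∀ q, |p.2 q| ≤ M}
          ≤ ((n : ℝ≥0∞) ^ 2) * (2 * ENNReal.ofReal (Real.exp (-((n:ℝ)^ε)/4))) := by
        have hbadset : ({p : (Idx n → ℝ) × (Idx n → ℝ) | ¬ ∀ q, |p.2 q| ≤ M})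
            = Set.univ ×ˢ {y : Idx n → ℝ | ¬ ∀ q, |y q| ≤ M} := by
          ext p
          simp [Set.mem_prod]
        rw [hbadset, Measure.prod_prod, measure_univ, one_mul]
        exact bad_bound hε hn1
      have h2 : ((muPi n).prod (muPi n)) (⋃ pq : {q : Fin n × Fin n // q.1 ≠ q.2},
            {p : (Idx n → ℝ) × (Idx n → ℝ) |
              t < |(symMat p.1 * symMat p.2 - symMat p.2 * symMat p.1) pq.1.1 pq.1.2|
                ∧ ∀ q, |p.2 q| ≤ M})
          ≤ ((n : ℝ≥0∞) ^ 2) * (2 * ENNReal.ofReal (Real.exp (-((n:ℝ)^ε)/16))) := by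
        refine (measure_iUnion_le _).trans ?_
        rw [tsum_fintype]
        calc ∑ pq : {q : Fin n × Fin n // q.1 ≠ q.2}, ((muPi n).prod (muPi n))
              {p : (Idx n → ℝ) × (Idx n → ℝ) |
                t < |(symMat p.1 * symMat p.2 - symMat p.2 * symMat p.1) pq.1.1 pq.1.2|
                  ∧ ∀ q, |p.2 q| ≤ M}
            ≤ ∑ _pq : {q : Fin n × Fin n // q.1 ≠ q.2},
              2 * ENNReal.ofReal (Real.exp (-((n:ℝ)^ε)/16)) :=
              Finset.sum_le_sum fun pq _ => pair_bound hε hn1 pq.1.1 pq.1.2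
          _ = (Fintype.card {q : Fin n × Fin n // q.1 ≠ q.2} : ℝ≥0∞)
              * (2 * ENNReal.ofReal (Real.exp (-((n:ℝ)^ε)/16))) := by
              rw [Finset.sum_const, Finset.card_univ, nsmul_eq_mul]
          _ ≤ ((n : ℝ≥0∞) ^ 2) * (2 * ENNReal.ofReal (Real.exp (-((n:ℝ)^ε)/16))) := by
              gcongr
              have hcard : Fintype.card {q : Fin n × Fin n // q.1 ≠ q.2} ≤ n ^ 2 := by
                calc Fintype.card {q : Fin n × Fin n // q.1 ≠ q.2}
                    ≤ Fintype.card (Fin n × Fin n) := Fintype.card_subtype_le _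
                  _ = n ^ 2 := by simp [sq]
              calc (Fintype.card {q : Fin n × Fin n // q.1 ≠ q.2} : ℝ≥0∞)
                  ≤ ((n ^ 2 : ℕ) : ℝ≥0∞) := by exact_mod_cast hcard
                _ = (n : ℝ≥0∞) ^ 2 := by push_cast; rfl
      have hee : ENNReal.ofReal (Real.exp (-((n:ℝ)^ε)/4))
          ≤ ENNReal.ofReal (Real.exp (-((n:ℝ)^ε)/16)) := by
        apply ENNReal.ofReal_le_ofReal
        apply Real.exp_le_exp.2
        have h0 : (0:ℝ) ≤ (n:ℝ)^ε := (Real.rpow_pos_of_pos hN _).le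
        linarith
      calc ((muPi n).prod (muPi n)) {p : (Idx n → ℝ) × (Idx n → ℝ) | ¬ ∀ q, |p.2 q| ≤ M}
            + ((muPi n).prod (muPi n)) (⋃ pq : {q : Fin n × Fin n // q.1 ≠ q.2},
              {p : (Idx n → ℝ) × (Idx n → ℝ) |
                t < |(symMat p.1 * symMat p.2 - symMat p.2 * symMat p.1) pq.1.1 pq.1.2|
                  ∧ ∀ q, |p.2 q| ≤ M})
          ≤ ((n : ℝ≥0∞) ^ 2) * (2 * ENNReal.ofReal (Real.exp (-((n:ℝ)^ε)/4)))
            + ((n : ℝ≥0∞) ^ 2) * (2 * ENNReal.ofReal (Real.exp (-((n:ℝ)^ε)/16))) :=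
            add_le_add h1 h2
        _ ≤ ((n : ℝ≥0∞) ^ 2) * (2 * ENNReal.ofReal (Real.exp (-((n:ℝ)^ε)/16)))
            + ((n : ℝ≥0∞) ^ 2) * (2 * ENNReal.ofReal (Real.exp (-((n:ℝ)^ε)/16))) := by
            gcongr
        _ = D n := by
            rw [hDdef]
            ring
    rw [tsub_le_iff_right]
    calc (1:ℝ≥0∞) = ((goeMeasure n).prod (goeMeasure n)) S
          + ((goeMeasure n).prod (goeMeasure n)) Sᶜ := by
          rw [measure_add_measure_compl hSmeas, measure_univ]
      _ ≤ ((goeMeasure n).prod (goeMeasure n)) S + D n := by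
          gcongr
          rw [hmap]
          exact hcompl_bound
  refine tendsto_of_tendsto_of_tendsto_of_le_of_le' (g := fun n : ℕ => 1 - D n)
      ?_ tendsto_const_nhds ?_ ?_
  · have hsub : Tendsto (fun n : ℕ => (1:ℝ≥0∞) - D n) atTop (𝓝 (1 - 0)) :=
      ENNReal.Tendsto.sub tendsto_const_nhds hDlim (Or.inl ENNReal.one_ne_top)
    simpa using hsub
  · filter_upwards [eventually_ge_atTop 2] with n hn using hmain n hn
  · filter_upwards with n
    haveI := hprob n
    exact prob_le_one
end

section
/- Let x, y ∈ (0, 1) and C ∈ ℝ. If x·log(x/y) + (1−x)·log((1−x)/(1−y)) ≤ C, then y ≥ x·exp(−(C + 1/e)/x). In particular, if x is bounded below by a positive constant and C is bounded above, then y is bounded below by a positive constant. -/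
lemma neg_mul_log_le_inv_e {t : ℝ} (ht : 0 < t) : -(t * Real.log t) ≤ 1 / Real.exp 1 := by
  have he : (0:ℝ) < Real.exp 1 := Real.exp_pos 1
  have h1 : Real.log (1 / t) = Real.log (1 / (t * Real.exp 1)) + 1 := by
    rw [Real.log_div one_ne_zero (ne_of_gt ht),
        Real.log_div one_ne_zero (by positivity),
        Real.log_mul (ne_of_gt ht) (ne_of_gt he), Real.log_exp]
    ring
  have h2 : Real.log (1 / (t * Real.exp 1)) ≤ 1 / (t * Real.exp 1) - 1 :=
    Real.log_le_sub_one_of_pos (by positivity)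
  have h3 : Real.log (1 / t) ≤ 1 / (t * Real.exp 1) := by linarith
  have h4 : -(t * Real.log t) = t * Real.log (1 / t) := by
    rw [Real.log_div one_ne_zero (ne_of_gt ht), Real.log_one]; ring
  rw [h4]
  calc t * Real.log (1 / t) ≤ t * (1 / (t * Real.exp 1)) :=
        mul_le_mul_of_nonneg_left h3 ht.le
    _ = 1 / Real.exp 1 := by field_simp

/-- If the Kullback–Leibler divergence between Bernoulli(x) and Bernoulli(y) is at most `C`,
then `y ≥ x · exp(−(C + 1/e)/x)`. -/
theorem bernoulli_kl_lower_bound (x y C : ℝ) (hx0 : 0 < x) (hx1 : x < 1)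
    (hy0 : 0 < y) (hy1 : y < 1)
    (hKL : x * Real.log (x / y) + (1 - x) * Real.log ((1 - x) / (1 - y)) ≤ C) :
    x * Real.exp (-(C + 1 / Real.exp 1) / x) ≤ y := by
  have hx' : (0:ℝ) < 1 - x := by linarith
  have hy' : (0:ℝ) < 1 - y := by linarith
  -- second term lower bound
  have hlog1y : Real.log (1 - y) ≤ 0 := Real.log_nonpos (by linarith) (by linarith)
  have hsplit : (1 - x) * Real.log ((1 - x) / (1 - y))
      = (1 - x) * Real.log (1 - x) - (1 - x) * Real.log (1 - y) := by
    rw [Real.log_div (ne_of_gt hx') (ne_of_gt hy')]; ring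
  have hterm2 : -(1 / Real.exp 1) ≤ (1 - x) * Real.log ((1 - x) / (1 - y)) := by
    have h1 : -(1 / Real.exp 1) ≤ (1 - x) * Real.log (1 - x) := by
      have := neg_mul_log_le_inv_e hx'
      linarith
    have h2 : (1 - x) * Real.log (1 - y) ≤ 0 :=
      mul_nonpos_of_nonneg_of_nonpos hx'.le hlog1y
    rw [hsplit]; linarith
  have hmain : x * Real.log (x / y) ≤ C + 1 / Real.exp 1 := by linarith
  have hlog : Real.log (x / y) ≤ (C + 1 / Real.exp 1) / x :=
    (le_div_iff₀' hx0).mpr hmain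
  have hexp : x / y ≤ Real.exp ((C + 1 / Real.exp 1) / x) := by
    calc x / y = Real.exp (Real.log (x / y)) :=
          (Real.exp_log (by positivity)).symm
      _ ≤ _ := Real.exp_le_exp.mpr hlog
  have hx_le : x ≤ y * Real.exp ((C + 1 / Real.exp 1) / x) := by
    have := (div_le_iff₀ hy0).mp hexp
    linarith
  rw [neg_div, Real.exp_neg]
  rw [mul_inv_le_iff₀ (Real.exp_pos _)] at *
  linarith [hx_le]
end

section
/- Let n ≥ 1, let X be an n×n doubly stochastic matrix, let π be a permutation of {1,…,n} with permutation matrix Π (where Π(i,j) = 1 if j = π(i) and 0 otherwise), and let π̂ : {1,…,n} → {1,…,n} be any function such that for every i, X(i, π̂(i)) = max_{j} X(i, j). Then #{i ∈ {1,…,n} : π̂(i) ≠ π(i)} ≤ 4·‖X − Π‖_F². In particular, if ‖X − Π‖_F² ≤ δn then the overlap n⁻¹·#{i : π̂(i) = π(i)} is at least 1 − 4δ. -/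
open Matrix

/-- Permutation matrix of a permutation. -/
def permMatrix {n : ℕ} (π : Equiv.Perm (Fin n)) : Matrix (Fin n) (Fin n) ℝ :=
  Matrix.of fun i j => if j = π i then (1 : ℝ) else 0

/-- If `X` is doubly stochastic, `Π` is the permutation matrix of `π`, and `π̂(i)` is a
row-wise argmax of `X`, then `#{i : π̂(i) ≠ π(i)} ≤ 4‖X − Π‖_F²`; in particular,
`‖X − Π‖_F² ≤ δn` implies overlap at least `1 − 4δ`. -/
theorem rowwise_argmax_overlap (n : ℕ) (hn : 1 ≤ n)
    (X : Matrix (Fin n) (Fin n) ℝ) (hX : X ∈ Birkhoff n)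
    (π : Equiv.Perm (Fin n)) (πhat : Fin n → Fin n)
    (hmax : ∀ i j, X i j ≤ X i (πhat i)) :
    ((Finset.univ.filter fun i => πhat i ≠ π i).card : ℝ)
        ≤ 4 * frob2 (X - permMatrix π) ∧
      ∀ δ : ℝ, frob2 (X - permMatrix π) ≤ δ * n →
        1 - 4 * δ ≤ ((Finset.univ.filter fun i => πhat i = π i).card : ℝ) / n := by
  obtain ⟨hpos, hrow, hcol⟩ := hX
  set bad := Finset.univ.filter fun i => πhat i ≠ π i with hbad
  have key : ∀ i ∈ bad, (1:ℝ)/4 ≤ ∑ j, ((X - permMatrix π) i j) ^ 2 := by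
    intro i hi
    have hne : πhat i ≠ π i := (Finset.mem_filter.mp hi).2
    have hsum : X i (π i) + X i (πhat i) ≤ 1 := by
      have := hrow i
      calc X i (π i) + X i (πhat i)
          = ∑ j ∈ ({π i, πhat i} : Finset (Fin n)), X i j := by
            rw [Finset.sum_pair (Ne.symm hne)]
        _ ≤ ∑ j, X i j := Finset.sum_le_sum_of_subset_of_nonneg
            (Finset.subset_univ _) (fun j _ _ => hpos i j)
        _ = 1 := this
    have hhalf : X i (π i) ≤ 1/2 := by
      have := hmax i (π i); linarith
    have hterm : (1:ℝ)/4 ≤ ((X - permMatrix π) i (π i)) ^ 2 := by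
      have : (X - permMatrix π) i (π i) = X i (π i) - 1 := by
        simp [permMatrix, Matrix.sub_apply]
      rw [this]
      nlinarith [hpos i (π i)]
    calc (1:ℝ)/4 ≤ ((X - permMatrix π) i (π i)) ^ 2 := hterm
      _ ≤ ∑ j, ((X - permMatrix π) i j) ^ 2 :=
          Finset.single_le_sum (f := fun j => ((X - permMatrix π) i j) ^ 2)
            (fun j _ => sq_nonneg _) (Finset.mem_univ _)
  have hmain : (bad.card : ℝ) ≤ 4 * frob2 (X - permMatrix π) := by
    have h1 : (bad.card : ℝ) * (1/4) ≤ ∑ i ∈ bad, ∑ j, ((X - permMatrix π) i j) ^ 2 := by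
      calc (bad.card : ℝ) * (1/4) = ∑ _i ∈ bad, (1:ℝ)/4 := by
            rw [Finset.sum_const, nsmul_eq_mul]
        _ ≤ _ := Finset.sum_le_sum key
    have h2 : ∑ i ∈ bad, ∑ j, ((X - permMatrix π) i j) ^ 2 ≤ frob2 (X - permMatrix π) := by
      unfold frob2
      exact Finset.sum_le_sum_of_subset_of_nonneg (Finset.subset_univ _)
        (fun i _ _ => Finset.sum_nonneg fun j _ => sq_nonneg _)
    linarith
  refine ⟨hmain, fun δ hδ => ?_⟩
  have hcard : (Finset.univ.filter fun i => πhat i = π i).card = n - bad.card := by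
    have := Finset.card_filter_add_card_filter_not
      (s := (Finset.univ : Finset (Fin n))) (p := fun i => πhat i = π i)
    simp only [Finset.card_univ, Fintype.card_fin] at this
    rw [hbad]; simp only [ne_eq]; omega
  have hbn : bad.card ≤ n := by
    simpa using Finset.card_le_card (Finset.subset_univ bad)
  have hcardR : ((Finset.univ.filter fun i => πhat i = π i).card : ℝ) = n - bad.card := by
    rw [hcard]; push_cast [hbn]; ring
  rw [hcardR]
  have hn0 : (0:ℝ) < n := by exact_mod_cast hn
  rw [le_div_iff₀ hn0]
  nlinarith
end
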